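/- arXiv:0705.3391 — 7 statements merged into one kernel-verified Lean document; each statement's English description precedes it below -/
import Mathlib

section
/- Let A and B be self-adjoint operators on a finite-dimensional complex inner product space with [B, BA²B] = 0, and let e be a vector that is an eigenvector of ABA with eigenvalue w and an eigenvector of AB²A with eigenvalue v. Then w · B(BA e) = v · BA e. Consequently, if BA e ≠ 0, then w ≠ 0 and BA e is an eigenvector of B with eigenvalue v/w. -/
variable {H : Type*} [NormedAddCommGroup H] [InnerProductSpace ℂ H] [FiniteDimensional ℂ H]

/-- If `[B, BA²B] = 0` and `e ≠ 0` is an eigenvector of `ABA` with eigenvalue `w` and of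
`AB²A` with eigenvalue `v`, then `w • B (B (A e)) = v • B (A e)`; consequently, if
`B (A e) ≠ 0` then `w ≠ 0` and `B (A e)` is an eigenvector of `B` with eigenvalue `v / w`. -/
theorem BAe_eigenvector_of_B (A B : H →ₗ[ℂ] H)
    (hA : IsSelfAdjoint A) (hB : IsSelfAdjoint B)
    (hcomm : B * (B * A ^ 2 * B) = (B * A ^ 2 * B) * B)
    (e : H) (he : e ≠ 0) (w v : ℂ)
    (hw : (A * B * A) e = w • e) (hv : (A * B ^ 2 * A) e = v • e) :
    w • B (B (A e)) = v • B (A e) ∧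
      (B (A e) ≠ 0 → w ≠ 0 ∧ B (B (A e)) = (v / w) • B (A e)) := by
  simp only [Module.End.mul_apply, pow_two] at hw hv
  have h1 : (B * A ^ 2 * B) (A e) = w • B (A e) := by
    simp only [Module.End.mul_apply, pow_two, hw, map_smul]
  have h2 : (B * A ^ 2 * B) (B (A e)) = v • B (A e) := by
    simp only [Module.End.mul_apply, pow_two, hv, map_smul]
  have key : w • B (B (A e)) = v • B (A e) := by
    have := congrArg (fun T : H →ₗ[ℂ] H => T (A e)) hcomm
    simpa only [Module.End.mul_apply, h1, h2, map_smul] using this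
  refine ⟨key, fun hf => ?_⟩
  have hA' : LinearMap.adjoint A = A := (LinearMap.isSelfAdjoint_iff' ).mp hA
  have hB' : LinearMap.adjoint B = B := (LinearMap.isSelfAdjoint_iff' ).mp hB
  have hBsym : ∀ x y : H, inner ℂ (B x) y = inner ℂ x (B y) := fun x y => by
    conv_lhs => rw [← hB']
    exact LinearMap.adjoint_inner_left B y x
  have hAsym : ∀ x y : H, inner ℂ (A x) y = inner ℂ x (A y) := fun x y => by
    conv_lhs => rw [← hA']
    exact LinearMap.adjoint_inner_left A y x
  have hnorm : inner ℂ (B (A e)) (B (A e)) = v * inner ℂ e e := by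
    calc inner ℂ (B (A e)) (B (A e))
        = inner ℂ (A e) (B (B (A e))) := hBsym _ _
      _ = inner ℂ e (A (B (B (A e)))) := hAsym _ _
      _ = inner ℂ e (v • e) := by rw [hv]
      _ = v * inner ℂ e e := by rw [inner_smul_right]
  have hv0 : v ≠ 0 := by
    intro h
    rw [h, zero_mul] at hnorm
    exact hf (inner_self_eq_zero.mp hnorm)
  have hw0 : w ≠ 0 := by
    intro h
    rw [h, zero_smul] at key
    exact hf (smul_eq_zero_iff_right hv0 |>.mp key.symm)
  refine ⟨hw0, ?_⟩
  rw [div_eq_inv_mul, mul_smul, ← key, smul_smul, inv_mul_cancel₀ hw0, one_smul]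
end

section
/- Let γ1 and γ2 be positive semidefinite operators on a finite-dimensional complex inner product space H, and let {Π_k} be a common block-diagonal structure (CBS) of γ1 and γ2, i.e., a finite family of pairwise orthogonal self-adjoint projections summing to the identity such that every Π_k commutes with γ1 and with γ2. Let P0 be the orthogonal projection onto ker γ1 + ker γ2. Then every Π_k commutes with P0, and consequently every Π_k commutes with the reduced operators γ_μ⁰ = P0 γ_μ P0 for μ = 1, 2. In other words, the reduction τ0 of unambiguous state discrimination preserves any CBS. -/
variable {H : Type*} [NormedAddCommGroup H] [InnerProductSpace ℂ H] [FiniteDimensional ℂ H]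

/-- A positive semidefinite operator: self-adjoint with nonnegative quadratic form. -/
def IsPosSemidef (S : H →ₗ[ℂ] H) : Prop :=
  IsSelfAdjoint S ∧ ∀ x : H, 0 ≤ (inner ℂ x (S x) : ℂ).re

/-- The reduction `τ0` of unambiguous state discrimination preserves any common
block-diagonal structure: if `{P k}` is a CBS of the positive semidefinite operators
`γ1` and `γ2` and `P0` is the orthogonal projection onto `ker γ1 + ker γ2`, then every
`P k` commutes with `P0` and with the reduced operators `P0 * γμ * P0`. -/
theorem tau0_preserves_cbs (γ1 γ2 : H →ₗ[ℂ] H)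
    (h1 : IsPosSemidef γ1) (h2 : IsPosSemidef γ2)
    (m : ℕ) (P : Fin m → H →ₗ[ℂ] H)
    (hsa : ∀ k, IsSelfAdjoint (P k))
    (hidem : ∀ k, P k * P k = P k)
    (horth : ∀ k l, k ≠ l → P k * P l = 0)
    (hsum : ∑ k, P k = 1)
    (hc1 : ∀ k, Commute (P k) γ1) (hc2 : ∀ k, Commute (P k) γ2)
    (P0 : H →ₗ[ℂ] H) (hP0sa : IsSelfAdjoint P0) (hP0idem : P0 * P0 = P0)
    (hP0range : LinearMap.range P0 = LinearMap.ker γ1 ⊔ LinearMap.ker γ2) :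
    ∀ k, Commute (P k) P0 ∧
      Commute (P k) (P0 * γ1 * P0) ∧ Commute (P k) (P0 * γ2 * P0) := by
  intro k
  -- P0 acts as identity on its range
  have hfix : ∀ y ∈ LinearMap.range P0, P0 y = y := by
    rintro y ⟨x, rfl⟩
    have := congrArg (fun f => f x) hP0idem
    simpa [Module.End.mul_apply] using this
  -- P k preserves range P0
  have hpres : ∀ y ∈ LinearMap.range P0, P k y ∈ LinearMap.range P0 := by
    intro y hy
    rw [hP0range] at hy ⊢
    obtain ⟨a, ha, b, hb, rfl⟩ := Submodule.mem_sup.mp hy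
    rw [map_add]
    refine Submodule.add_mem_sup ?_ ?_
    · have : γ1 (P k a) = P k (γ1 a) := by
        have := congrArg (fun f => f a) (hc1 k).eq
        simpa [Module.End.mul_apply] using this.symm
      simp [LinearMap.mem_ker, this, LinearMap.mem_ker.mp ha]
    · have : γ2 (P k b) = P k (γ2 b) := by
        have := congrArg (fun f => f b) (hc2 k).eq
        simpa [Module.End.mul_apply] using this.symm
      simp [LinearMap.mem_ker, this, LinearMap.mem_ker.mp hb]
  -- hence P0 * (P k * P0) = P k * P0
  have key : P0 * (P k * P0) = P k * P0 := by
    ext x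
    simp only [Module.End.mul_apply]
    exact hfix _ (hpres _ ⟨x, rfl⟩)
  have hcomm : Commute (P k) P0 := by
    have hstar := congrArg star key
    simp only [star_mul, (hsa k).star_eq, hP0sa.star_eq] at hstar
    -- hstar : (P0 * P k) * P0 = P0 * P k
    unfold Commute SemiconjBy
    calc P k * P0 = P0 * (P k * P0) := key.symm
      _ = (P0 * P k) * P0 := by noncomm_ring
      _ = P0 * P k := hstar
  refine ⟨hcomm, ?_, ?_⟩
  · calc P k * (P0 * γ1 * P0) = P0 * (P k * γ1) * P0 := by
          rw [show P k * (P0 * γ1 * P0) = (P k * P0) * γ1 * P0 by noncomm_ring, hcomm.eq]; noncomm_ring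
      _ = P0 * γ1 * (P k * P0) := by rw [(hc1 k).eq]; noncomm_ring
      _ = (P0 * γ1 * P0) * P k := by rw [hcomm.eq]; noncomm_ring
  · calc P k * (P0 * γ2 * P0) = P0 * (P k * γ2) * P0 := by
          rw [show P k * (P0 * γ2 * P0) = (P k * P0) * γ2 * P0 by noncomm_ring, hcomm.eq]; noncomm_ring
      _ = P0 * γ2 * (P k * P0) := by rw [(hc2 k).eq]; noncomm_ring
      _ = (P0 * γ2 * P0) * P k := by rw [hcomm.eq]; noncomm_ring
end

section
/- Let γ1 and γ2 be positive semidefinite operators on a finite-dimensional complex inner product space H, and let {Π_k} be a common block-diagonal structure (CBS) of γ1 and γ2. Let P1 be the orthogonal projection onto ker γ1 + range γ2. Then every Π_k commutes with P1, and consequently every Π_k commutes with the reduced operators γ_μ¹ = P1 γ_μ P1 + (1 − P1) γ_μ (1 − P1) for μ = 1, 2. In other words, the reduction τ1 of unambiguous state discrimination preserves any CBS (and, by exchanging the roles of γ1 and γ2, so does τ2). -/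
variable {H : Type*} [NormedAddCommGroup H] [InnerProductSpace ℂ H] [FiniteDimensional ℂ H]

/-- The reduction `τ1` of unambiguous state discrimination preserves any common
block-diagonal structure: if `{P k}` is a CBS of the positive semidefinite operators
`γ1` and `γ2` and `P1` is the orthogonal projection onto `ker γ1 + range γ2`, then every
`P k` commutes with `P1` and with the reduced operators
`P1 * γμ * P1 + (1 - P1) * γμ * (1 - P1)`. -/
theorem tau1_preserves_cbs (γ1 γ2 : H →ₗ[ℂ] H)
    (h1 : IsPosSemidef γ1) (h2 : IsPosSemidef γ2)
    (m : ℕ) (P : Fin m → H →ₗ[ℂ] H)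
    (hsa : ∀ k, IsSelfAdjoint (P k))
    (hidem : ∀ k, P k * P k = P k)
    (horth : ∀ k l, k ≠ l → P k * P l = 0)
    (hsum : ∑ k, P k = 1)
    (hc1 : ∀ k, Commute (P k) γ1) (hc2 : ∀ k, Commute (P k) γ2)
    (P1 : H →ₗ[ℂ] H) (hP1sa : IsSelfAdjoint P1) (hP1idem : P1 * P1 = P1)
    (hP1range : LinearMap.range P1 = LinearMap.ker γ1 ⊔ LinearMap.range γ2) :
    ∀ k, Commute (P k) P1 ∧
      Commute (P k) (P1 * γ1 * P1 + (1 - P1) * γ1 * (1 - P1)) ∧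
      Commute (P k) (P1 * γ2 * P1 + (1 - P1) * γ2 * (1 - P1)) := by
  intro k
  have hP1adj : LinearMap.adjoint P1 = P1 := LinearMap.isSelfAdjoint_iff'.mp hP1sa
  have hPkadj : LinearMap.adjoint (P k) = P k := LinearMap.isSelfAdjoint_iff'.mp (hsa k)
  set V := LinearMap.ker γ1 ⊔ LinearMap.range γ2 with hV
  -- P1 fixes V pointwise
  have hfix : ∀ v ∈ V, P1 v = v := by
    intro v hv
    rw [← hP1range] at hv
    obtain ⟨w, rfl⟩ := hv
    have := congrArg (fun f : H →ₗ[ℂ] H => f w) hP1idem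
    simpa using this
  -- range P1 ⊆ V
  have hmemV : ∀ x : H, P1 x ∈ V := by
    intro x
    rw [← hP1range]
    exact LinearMap.mem_range_self _ _
  -- vectors killed by P1 are orthogonal to V
  have hkerP1 : ∀ y, P1 y = 0 → ∀ v ∈ V, (inner ℂ y v : ℂ) = 0 := by
    intro y hy v hv
    calc (inner ℂ y v : ℂ) = inner ℂ y (P1 v) := by rw [hfix v hv]
      _ = inner ℂ (LinearMap.adjoint P1 y) v := (LinearMap.adjoint_inner_left P1 v y).symm
      _ = inner ℂ (P1 y) v := by rw [hP1adj]
      _ = 0 := by rw [hy, inner_zero_left]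
  -- vectors orthogonal to V are killed by P1
  have horthker : ∀ y, (∀ v ∈ V, (inner ℂ y v : ℂ) = 0) → P1 y = 0 := by
    intro y hy
    have h0 : (inner ℂ (P1 y) (P1 y) : ℂ) = 0 := by
      calc (inner ℂ (P1 y) (P1 y) : ℂ)
          = inner ℂ (LinearMap.adjoint P1 (P1 y)) y := by
            rw [LinearMap.adjoint_inner_left, ← LinearMap.adjoint_inner_right, hP1adj]
      _ = inner ℂ (P1 (P1 y)) y := by rw [hP1adj]
      _ = inner ℂ (P1 y) y := by
            have := congrArg (fun f : H →ₗ[ℂ] H => f y) hP1idem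
            simp only [Module.End.mul_apply] at this
            rw [this]
      _ = 0 := by
            rw [← inner_conj_symm, hy (P1 y) (hmemV y), map_zero]
    exact inner_self_eq_zero.mp h0
  -- P k preserves V
  have hinv : ∀ v ∈ V, P k v ∈ V := by
    intro v hv
    rcases Submodule.mem_sup.mp hv with ⟨a, ha, b, hb, rfl⟩
    rcases hb with ⟨w, rfl⟩
    rw [map_add]
    apply Submodule.add_mem
    · apply Submodule.mem_sup_left
      rw [LinearMap.mem_ker]
      have := congrArg (fun f : H →ₗ[ℂ] H => f a) (hc1 k)
      simp only [Module.End.mul_apply] at this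
      rw [← this, LinearMap.mem_ker.mp ha, map_zero]
    · apply Submodule.mem_sup_right
      have := congrArg (fun f : H →ₗ[ℂ] H => f w) (hc2 k)
      simp only [Module.End.mul_apply] at this
      rw [this]
      exact LinearMap.mem_range_self _ _
  -- the key commutation with P1
  have hcomm : Commute (P k) P1 := by
    apply LinearMap.ext
    intro x
    simp only [Module.End.mul_apply]
    have hz : P1 (x - P1 x) = 0 := by
      have := congrArg (fun f : H →ₗ[ℂ] H => f x) hP1idem
      simp only [Module.End.mul_apply] at this
      rw [map_sub, this, sub_self]
    have h2 : P1 (P k (x - P1 x)) = 0 := by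
      apply horthker
      intro v hv
      calc (inner ℂ (P k (x - P1 x)) v : ℂ)
          = inner ℂ (LinearMap.adjoint (P k) (x - P1 x)) v := by rw [hPkadj]
        _ = inner ℂ (x - P1 x) (P k v) := LinearMap.adjoint_inner_left _ _ _
        _ = 0 := hkerP1 _ hz _ (hinv v hv)
    have h1' : P1 (P k (P1 x)) = P k (P1 x) := hfix _ (hinv _ (hmemV x))
    have : P1 (P k x) = P1 (P k (P1 x)) + P1 (P k (x - P1 x)) := by
      rw [← map_add, ← map_add, add_sub_cancel]
    rw [this, h1', h2, add_zero]
  have hcomm' : Commute (P k) (1 - P1) := (Commute.one_right _).sub_right hcomm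
  refine ⟨hcomm, ?_, ?_⟩
  · exact ((hcomm.mul_right (hc1 k)).mul_right hcomm).add_right
      ((hcomm'.mul_right (hc1 k)).mul_right hcomm')
  · exact ((hcomm.mul_right (hc2 k)).mul_right hcomm).add_right
      ((hcomm'.mul_right (hc2 k)).mul_right hcomm')
end

section
/- Let N ≥ 2 and let ψ_1, …, ψ_N be unit vectors in ℂ^d with ⟨ψ_i, ψ_j⟩ = c for all i ≠ j, where c is real with 0 < c < 1. With P_k = ψ_k ψ_k† and γ1 = N⁻² Σ_k P_k ⊗ P_k, γ2 = N⁻² Σ_{k≠l} P_k ⊗ P_l (Kronecker products), the supports of γ1 and γ2 intersect trivially: range γ1 ∩ range γ2 = {0}. -/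
open Matrix Kronecker

/-- The rank-one projection `ψ ψ†` onto the span of the unit vector `ψ k`. -/
noncomputable def projOf {d N : ℕ} (ψ : Fin N → Fin d → ℂ) (k : Fin N) :
    Matrix (Fin d) (Fin d) ℂ :=
  Matrix.vecMulVec (ψ k) (star (ψ k))

/-- `γ1 = N⁻² ∑ k, P k ⊗ P k`, describing a pair of identical states. -/
noncomputable def gammaOne {d N : ℕ} (ψ : Fin N → Fin d → ℂ) :
    Matrix (Fin d × Fin d) (Fin d × Fin d) ℂ :=
  ((N : ℂ) ^ 2)⁻¹ • ∑ k, projOf ψ k ⊗ₖ projOf ψ k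

/-- `γ2 = N⁻² ∑ k ≠ l, P k ⊗ P l`, describing a pair of distinct states. -/
noncomputable def gammaTwo {d N : ℕ} (ψ : Fin N → Fin d → ℂ) :
    Matrix (Fin d × Fin d) (Fin d × Fin d) ℂ :=
  ((N : ℂ) ^ 2)⁻¹ • ∑ p ∈ Finset.univ.filter (fun p : Fin N × Fin N => p.1 ≠ p.2),
    projOf ψ p.1 ⊗ₖ projOf ψ p.2

/-- The states `ψ k` are linearly independent, since their Gram matrix
`(1 - c)·I + c·J` is positive definite for `0 < c < 1`. -/
theorem psi_li {d N : ℕ} (ψ : Fin N → Fin d → ℂ)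
    (hnorm : ∀ k, star (ψ k) ⬝ᵥ ψ k = 1)
    (c : ℝ) (hc0 : 0 < c) (hc1 : c < 1)
    (hoverlap : ∀ i j, i ≠ j → star (ψ i) ⬝ᵥ ψ j = (c : ℂ)) :
    LinearIndependent ℂ ψ := by
  rw [Fintype.linearIndependent_iff]
  intro g hg
  set S : ℂ := ∑ i, g i with hS
  have key : ∀ j, (1 - (c:ℂ)) * g j + (c:ℂ) * S = 0 := by
    intro j
    have h0 : star (ψ j) ⬝ᵥ (∑ i, g i • ψ i) = 0 := by rw [hg, dotProduct_zero]
    have h1 : star (ψ j) ⬝ᵥ (∑ i, g i • ψ i) = ∑ i, g i * (star (ψ j) ⬝ᵥ ψ i) := by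
      simp only [dotProduct, Finset.sum_apply, Pi.smul_apply, smul_eq_mul, Finset.mul_sum]
      rw [Finset.sum_comm]
      exact Finset.sum_congr rfl fun i _ => Finset.sum_congr rfl fun x _ => by ring
    have h2 : ∀ i, g i * (star (ψ j) ⬝ᵥ ψ i)
        = (c:ℂ) * g i + (if i = j then (1 - (c:ℂ)) * g i else 0) := by
      intro i
      by_cases h : i = j
      · subst h; rw [hnorm i]; simp; ring
      · rw [hoverlap j i (Ne.symm h)]; simp [h]; ring
    rw [h1] at h0
    rw [Finset.sum_congr rfl (fun i _ => h2 i), Finset.sum_add_distrib,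
      Finset.sum_ite_eq' Finset.univ j (fun i => (1 - (c:ℂ)) * g i)] at h0
    simp only [Finset.mem_univ, if_true, ← Finset.mul_sum] at h0
    rw [← hS] at h0
    linear_combination h0
  have hsum : ((1 - (c:ℂ)) + N * c) * S = 0 := by
    have := Finset.sum_congr rfl (fun j (_ : j ∈ Finset.univ) => key j)
    simp only [Finset.sum_add_distrib, Finset.sum_const, Finset.card_univ, Fintype.card_fin,
      nsmul_eq_mul, ← Finset.mul_sum, Finset.sum_const_zero, ← hS] at this
    linear_combination this
  have hne : ((1 - (c:ℂ)) + N * c) ≠ 0 := by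
    have : ((1 - c + N * c : ℝ) : ℂ) = (1 - (c:ℂ)) + N * c := by push_cast; ring
    rw [← this]
    have hn : (0:ℝ) ≤ (N:ℝ) * c := mul_nonneg (Nat.cast_nonneg N) hc0.le
    exact_mod_cast ne_of_gt (by linarith : (0:ℝ) < 1 - c + N * c)
  have hS0 : S = 0 := by
    rcases mul_eq_zero.mp hsum with h | h
    · exact absurd h hne
    · exact h
  intro j
  have := key j
  rw [hS0, mul_zero, add_zero] at this
  have hne1 : (1 - (c:ℂ)) ≠ 0 := by
    have : ((1 - c : ℝ) : ℂ) = 1 - (c:ℂ) := by push_cast; ring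
    rw [← this]
    exact_mod_cast ne_of_gt (by linarith : (0:ℝ) < 1 - c)
  rcases mul_eq_zero.mp this with h | h
  · exact absurd h hne1
  · exact h

/-- The tensor family `ψ_k ⊗ ψ_l` is linearly independent. -/
theorem tensor_li {d N : ℕ} (ψ : Fin N → Fin d → ℂ) (hli : LinearIndependent ℂ ψ) :
    LinearIndependent ℂ
      (fun p : Fin N × Fin N => fun ij : Fin d × Fin d => ψ p.1 ij.1 * ψ p.2 ij.2) := by
  rw [Fintype.linearIndependent_iff]
  intro g hg
  have hA := Fintype.linearIndependent_iff.mp hli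
  have heval : ∀ ij : Fin d × Fin d,
      (∑ p : Fin N × Fin N, g p * (ψ p.1 ij.1 * ψ p.2 ij.2)) = 0 := by
    intro ij
    have := congrFun hg ij
    simpa [Finset.sum_apply] using this
  have step1 : ∀ (j : Fin d) (k : Fin N), (∑ l, g (k, l) * ψ l j) = 0 := by
    intro j k
    refine hA (fun k => ∑ l, g (k, l) * ψ l j) ?_ k
    funext i
    have h := heval (i, j)
    rw [Fintype.sum_prod_type] at h
    simp only [Finset.sum_apply, Pi.smul_apply, smul_eq_mul, Pi.zero_apply]
    rw [← h]
    refine Finset.sum_congr rfl fun a _ => ?_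
    rw [Finset.sum_mul]
    exact Finset.sum_congr rfl fun b _ => by ring
  intro p
  refine hA (fun l => g (p.1, l)) ?_ p.2
  funext j
  simp only [Finset.sum_apply, Pi.smul_apply, smul_eq_mul, Pi.zero_apply]
  exact step1 j p.1

/-- `(P_k ⊗ P_l) x` is a scalar multiple of `ψ_k ⊗ ψ_l`. -/
theorem key_mulVec {d N : ℕ} (ψ : Fin N → Fin d → ℂ) (k l : Fin N)
    (x : Fin d × Fin d → ℂ) :
    (projOf ψ k ⊗ₖ projOf ψ l).mulVec x
      = ((fun p : Fin d × Fin d => star (ψ k p.1) * star (ψ l p.2)) ⬝ᵥ x)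
        • fun p : Fin d × Fin d => ψ k p.1 * ψ l p.2 := by
  funext ij
  obtain ⟨i, j⟩ := ij
  simp only [mulVec, dotProduct, kroneckerMap_apply, projOf, vecMulVec_apply, Pi.star_apply,
    Pi.smul_apply, smul_eq_mul, Finset.sum_mul]
  refine Finset.sum_congr rfl fun p _ => by ring

theorem sum_mulVec' {n m : Type*} [Fintype m] {ι : Type*} (s : Finset ι)
    (M : ι → Matrix n m ℂ) (x : m → ℂ) :
    (∑ i ∈ s, M i).mulVec x = ∑ i ∈ s, (M i).mulVec x := by
  funext j
  simp only [mulVec, dotProduct, Finset.sum_apply, Matrix.sum_apply, Finset.sum_mul]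
  exact Finset.sum_comm

/-- For the state-comparison operators `γ1` and `γ2`, the supports intersect trivially:
`range γ1 ∩ range γ2 = {0}`. -/
theorem supports_disjoint (d N : ℕ) (hN : 2 ≤ N) (ψ : Fin N → Fin d → ℂ)
    (hnorm : ∀ k, star (ψ k) ⬝ᵥ ψ k = 1)
    (c : ℝ) (hc0 : 0 < c) (hc1 : c < 1)
    (hoverlap : ∀ i j, i ≠ j → star (ψ i) ⬝ᵥ ψ j = (c : ℂ)) :
    LinearMap.range (gammaOne ψ).mulVecLin ⊓ LinearMap.range (gammaTwo ψ).mulVecLin = ⊥ := by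
  set T : Fin N × Fin N → (Fin d × Fin d → ℂ) :=
    fun p => fun ij => ψ p.1 ij.1 * ψ p.2 ij.2 with hT
  have hli : LinearIndependent ℂ T := tensor_li ψ (psi_li ψ hnorm c hc0 hc1 hoverlap)
  have hdisj : Disjoint (Submodule.span ℂ (T '' {p : Fin N × Fin N | p.1 = p.2}))
      (Submodule.span ℂ (T '' {p : Fin N × Fin N | p.1 ≠ p.2})) := by
    refine hli.disjoint_span_image ?_
    rw [Set.disjoint_left]
    intro p hp hp'
    exact hp' hp
  have hr1 : LinearMap.range (gammaOne ψ).mulVecLin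
      ≤ Submodule.span ℂ (T '' {p : Fin N × Fin N | p.1 = p.2}) := by
    rintro x ⟨y, rfl⟩
    rw [mulVecLin_apply, gammaOne, smul_mulVec, sum_mulVec']
    refine Submodule.smul_mem _ _ (Submodule.sum_mem _ fun k _ => ?_)
    rw [key_mulVec]
    refine Submodule.smul_mem _ _ (Submodule.subset_span ?_)
    exact ⟨(k, k), rfl, rfl⟩
  have hr2 : LinearMap.range (gammaTwo ψ).mulVecLin
      ≤ Submodule.span ℂ (T '' {p : Fin N × Fin N | p.1 ≠ p.2}) := by
    rintro x ⟨y, rfl⟩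
    rw [mulVecLin_apply, gammaTwo, smul_mulVec, sum_mulVec']
    refine Submodule.smul_mem _ _ (Submodule.sum_mem _ fun p hp => ?_)
    rw [key_mulVec]
    refine Submodule.smul_mem _ _ (Submodule.subset_span ?_)
    exact ⟨p, Finset.mem_filter.mp hp |>.2, rfl⟩
  rw [eq_bot_iff]
  exact le_trans (inf_le_inf hr1 hr2) hdisj.le_bot
end

section
/- Let N ≥ 2 and let ψ_1, …, ψ_N be unit vectors in ℂ^d with ⟨ψ_i, ψ_j⟩ = c for all i ≠ j, where c is real with 0 < c < 1. With γ1 = N⁻² Σ_k P_k ⊗ P_k and γ2 = N⁻² Σ_{k≠l} P_k ⊗ P_l as above, the commutator [γ1, γ1 γ2 γ1] vanishes: γ1 (γ1 γ2 γ1) = (γ1 γ2 γ1) γ1. -/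
open Matrix Kronecker

namespace GAux
variable {d N : ℕ} (ψ : Fin N → Fin d → ℂ)

noncomputable def ov (i j : Fin N) : ℂ := star (ψ i) ⬝ᵥ ψ j

noncomputable def E (k l : Fin N) : Matrix (Fin d) (Fin d) ℂ :=
  Matrix.vecMulVec (ψ k) (star (ψ l))

lemma E_mul (a k b l : Fin N) : E ψ a k * E ψ b l = ov ψ k b • E ψ a l := by
  ext i j
  simp only [Matrix.mul_apply, Matrix.vecMulVec_apply, Matrix.smul_apply, ov, dotProduct,
    smul_eq_mul, E]
  rw [Finset.sum_mul]
  exact Finset.sum_congr rfl fun t _ => by ring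

noncomputable def G (a b k l : Fin N) : Matrix (Fin d × Fin d) (Fin d × Fin d) ℂ :=
  E ψ a k ⊗ₖ E ψ b l

lemma G_mul (a b k l a' b' k' l' : Fin N) :
    G ψ a b k l * G ψ a' b' k' l' = (ov ψ k a' * ov ψ l b') • G ψ a b k' l' := by
  rw [G, G, G, ← Matrix.mul_kronecker_mul, E_mul, E_mul, Matrix.smul_kronecker,
    Matrix.kronecker_smul, smul_smul]

lemma projOf_kron (k l : Fin N) : projOf ψ k ⊗ₖ projOf ψ l = G ψ k l k l := by
  simp only [G, E, projOf]

noncomputable def Phi (M : Matrix (Fin N) (Fin N) ℂ) :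
    Matrix (Fin d × Fin d) (Fin d × Fin d) ℂ :=
  ∑ a, ∑ b, M a b • G ψ a a b b

noncomputable def Hm : Matrix (Fin N) (Fin N) ℂ :=
  Matrix.of fun b c => ov ψ b c * ov ψ b c

lemma quad (f g : Fin N → Fin N → ℂ) :
    (∑ a, ∑ b, f a b • G ψ a a b b) * (∑ c, ∑ e, g c e • G ψ c c e e)
      = ∑ a, ∑ e, (∑ b, ∑ c, f a b * (ov ψ b c * ov ψ b c) * g c e) • G ψ a a e e := by
  rw [Finset.sum_mul]
  refine Finset.sum_congr rfl fun a _ => ?_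
  trans ∑ b, ∑ c, ∑ e, (f a b * (ov ψ b c * ov ψ b c) * g c e) • G ψ a a e e
  · rw [Finset.sum_mul]
    refine Finset.sum_congr rfl fun b _ => ?_
    rw [smul_mul_assoc, Finset.mul_sum, Finset.smul_sum]
    refine Finset.sum_congr rfl fun c _ => ?_
    rw [Finset.mul_sum, Finset.smul_sum]
    refine Finset.sum_congr rfl fun e _ => ?_
    rw [mul_smul_comm, G_mul, smul_smul, smul_smul]
    congr 1
    ring
  · trans ∑ b, ∑ e, ∑ c, (f a b * (ov ψ b c * ov ψ b c) * g c e) • G ψ a a e e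
    · exact Finset.sum_congr rfl fun b _ => Finset.sum_comm
    · rw [Finset.sum_comm]
      refine Finset.sum_congr rfl fun e _ => ?_
      rw [Finset.sum_smul]
      refine Finset.sum_congr rfl fun b _ => ?_
      rw [Finset.sum_smul]

lemma Phi_mul (M M' : Matrix (Fin N) (Fin N) ℂ) :
    Phi ψ M * Phi ψ M' = Phi ψ (M * Hm ψ * M') := by
  rw [Phi, Phi, Phi]
  refine (quad ψ M M').trans ?_
  refine Finset.sum_congr rfl fun a _ => Finset.sum_congr rfl fun e _ => ?_
  congr 1
  rw [Matrix.mul_apply]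
  conv_lhs => rw [Finset.sum_comm]
  refine Finset.sum_congr rfl fun j _ => ?_
  rw [Matrix.mul_apply, Finset.sum_mul]
  refine Finset.sum_congr rfl fun b _ => ?_
  simp only [Hm, Matrix.of_apply]

lemma Phi_one : Phi ψ 1 = ∑ k, projOf ψ k ⊗ₖ projOf ψ k := by
  trans ∑ a : Fin N, G ψ a a a a
  · rw [Phi]
    refine Finset.sum_congr rfl fun a _ => ?_
    simp [Matrix.one_apply, ite_smul]
  · exact Finset.sum_congr rfl fun a _ => (projOf_kron ψ a a).symm

noncomputable def Wm : Matrix (Fin N) (Fin N) ℂ :=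
  Matrix.of fun a n => ∑ p ∈ Finset.univ.filter (fun p : Fin N × Fin N => p.1 ≠ p.2),
    (ov ψ a p.1 * ov ψ p.1 n) * (ov ψ a p.2 * ov ψ p.2 n)

lemma core :
    (∑ a, projOf ψ a ⊗ₖ projOf ψ a) *
        (∑ p ∈ Finset.univ.filter (fun p : Fin N × Fin N => p.1 ≠ p.2),
          projOf ψ p.1 ⊗ₖ projOf ψ p.2) *
      (∑ n, projOf ψ n ⊗ₖ projOf ψ n) = Phi ψ (Wm ψ) := by
  simp only [projOf_kron]
  have h1 : (∑ a, G ψ a a a a) *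
      (∑ p ∈ Finset.univ.filter (fun p : Fin N × Fin N => p.1 ≠ p.2),
        G ψ p.1 p.2 p.1 p.2)
      = ∑ a, ∑ p ∈ Finset.univ.filter (fun p : Fin N × Fin N => p.1 ≠ p.2),
          (ov ψ a p.1 * ov ψ a p.2) • G ψ a a p.1 p.2 := by
    rw [Finset.sum_mul]
    refine Finset.sum_congr rfl fun a _ => ?_
    rw [Finset.mul_sum]
    exact Finset.sum_congr rfl fun p _ => G_mul ψ a a a a p.1 p.2 p.1 p.2
  rw [h1, Finset.sum_mul, Phi]
  refine Finset.sum_congr rfl fun a _ => ?_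
  trans ∑ p ∈ Finset.univ.filter (fun p : Fin N × Fin N => p.1 ≠ p.2), ∑ n,
      ((ov ψ a p.1 * ov ψ a p.2) * (ov ψ p.1 n * ov ψ p.2 n)) • G ψ a a n n
  · rw [Finset.sum_mul]
    refine Finset.sum_congr rfl fun p _ => ?_
    rw [smul_mul_assoc, Finset.mul_sum, Finset.smul_sum]
    refine Finset.sum_congr rfl fun n _ => ?_
    rw [G_mul, smul_smul]
  · rw [Finset.sum_comm]
    refine Finset.sum_congr rfl fun n _ => ?_
    rw [Wm, Matrix.of_apply, Finset.sum_smul]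
    refine Finset.sum_congr rfl fun p _ => ?_
    congr 1
    ring

noncomputable def Jm : Matrix (Fin N) (Fin N) ℂ := Matrix.of fun _ _ => 1

lemma sum_one_pt (a : Fin N) (x y : ℂ) :
    ∑ k, (if k = a then x else y) = x + ((N : ℂ) - 1) * y := by
  have h : ∀ k : Fin N, (if k = a then x else y) = y + (if k = a then x - y else 0) :=
    fun k => by split <;> ring
  simp only [h, Finset.sum_add_distrib, Finset.sum_const, Finset.card_univ, Fintype.card_fin,
    Finset.sum_ite_eq', Finset.mem_univ, if_true, nsmul_eq_mul]
  ring

lemma sum_two_pt (a n : Fin N) (h : a ≠ n) (x y z : ℂ) :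
    ∑ k, (if k = a then x else if k = n then y else z) = x + y + ((N : ℂ) - 2) * z := by
  have hp : ∀ k : Fin N, (if k = a then x else if k = n then y else z)
      = z + (if k = a then x - z else 0) + (if k = n then y - z else 0) := by
    intro k
    by_cases h1 : k = a <;> by_cases h2 : k = n
    · exact absurd (h1 ▸ h2) h
    · simp only [h1, h2, if_true, if_false, Ne.symm h]
      simp [h, Ne.symm h]
    · simp only [h1, h2, if_true, if_false]
      simp [h, Ne.symm h]
    · simp [h1, h2]
  simp only [hp, Finset.sum_add_distrib, Finset.sum_const, Finset.card_univ, Fintype.card_fin,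
    Finset.sum_ite_eq', Finset.mem_univ, if_true, nsmul_eq_mul]
  ring

lemma pair_sum (f : Fin N → ℂ) :
    ∑ p ∈ Finset.univ.filter (fun p : Fin N × Fin N => p.1 ≠ p.2), f p.1 * f p.2
      = (∑ k, f k) * (∑ k, f k) - ∑ k, f k * f k := by
  have h := Finset.sum_filter_add_sum_filter_not (Finset.univ : Finset (Fin N × Fin N))
    (fun p => p.1 ≠ p.2) (fun p => f p.1 * f p.2)
  have htot : ∑ p : Fin N × Fin N, f p.1 * f p.2 = (∑ k, f k) * (∑ k, f k) := by
    rw [Finset.sum_mul_sum, Fintype.sum_prod_type]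
  have hdiag : ∑ p ∈ Finset.univ.filter (fun p : Fin N × Fin N => ¬p.1 ≠ p.2),
      f p.1 * f p.2 = ∑ k, f k * f k := by
    rw [Finset.sum_filter, Fintype.sum_prod_type]
    simp [not_not, Finset.sum_ite_eq']
  rw [htot, hdiag] at h
  linear_combination h

lemma Hm_eq (c : ℂ) (hov : ∀ i j, ov ψ i j = if i = j then 1 else c) :
    Hm ψ = ((1 : ℂ) - c ^ 2) • (1 : Matrix (Fin N) (Fin N) ℂ) + (c ^ 2) • Jm := by
  ext b e
  simp only [Hm, Jm, Matrix.of_apply, Matrix.add_apply, Matrix.smul_apply, Matrix.one_apply,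
    hov, smul_eq_mul]
  split_ifs <;> ring

lemma Wm_eq (c : ℂ) (hov : ∀ i j, ov ψ i j = if i = j then 1 else c) :
    Wm ψ = (((1 + ((N : ℂ) - 1) * c ^ 2) ^ 2 - (1 + ((N : ℂ) - 1) * c ^ 4))
          - ((2 * c + ((N : ℂ) - 2) * c ^ 2) ^ 2 - (2 * c ^ 2 + ((N : ℂ) - 2) * c ^ 4)))
        • (1 : Matrix (Fin N) (Fin N) ℂ)
      + ((2 * c + ((N : ℂ) - 2) * c ^ 2) ^ 2 - (2 * c ^ 2 + ((N : ℂ) - 2) * c ^ 4)) • Jm := by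
  ext a n
  rw [Wm, Matrix.of_apply, pair_sum (fun k => ov ψ a k * ov ψ k n)]
  simp only [Matrix.add_apply, Matrix.smul_apply, Matrix.one_apply, Jm, Matrix.of_apply,
    smul_eq_mul]
  by_cases hd : a = n
  · subst hd
    have hf : ∀ k, ov ψ a k * ov ψ k a = if k = a then 1 else c * c := by
      intro k
      rw [hov, hov]
      by_cases hk : k = a
      · subst hk; simp
      · rw [if_neg (fun h => hk h.symm), if_neg hk, if_neg hk]
    have hf2 : ∀ k, (ov ψ a k * ov ψ k a) * (ov ψ a k * ov ψ k a)
        = if k = a then 1 else (c * c) * (c * c) := by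
      intro k
      rw [hf]
      split <;> ring
    calc (∑ k, ov ψ a k * ov ψ k a) * (∑ k, ov ψ a k * ov ψ k a)
          - ∑ k, (ov ψ a k * ov ψ k a) * (ov ψ a k * ov ψ k a)
        = (∑ k, if k = a then 1 else c * c) * (∑ k, if k = a then 1 else c * c)
          - ∑ k, (if k = a then (1:ℂ) else (c * c) * (c * c)) := by
            rw [Finset.sum_congr rfl fun k _ => hf k, Finset.sum_congr rfl fun k _ => hf2 k]
      _ = _ := by
            rw [sum_one_pt, sum_one_pt]
            simp only [eq_self_iff_true, if_true]
            ring
  · have hf : ∀ k, ov ψ a k * ov ψ k n = if k = a then c else if k = n then c else c * c := by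
      intro k
      rw [hov, hov]
      by_cases h1 : k = a <;> by_cases h2 : k = n
      · exact absurd (h1 ▸ h2) hd
      · subst h1; simp [hd]
      · subst h2; simp [hd, h1]
      · simp [h1, h2, Ne.symm h1]
    have hf2 : ∀ k, (ov ψ a k * ov ψ k n) * (ov ψ a k * ov ψ k n)
        = if k = a then c * c else if k = n then c * c else (c * c) * (c * c) := by
      intro k
      rw [hf]
      split <;> [ring; split <;> ring]
    rw [Finset.sum_congr rfl fun k _ => hf k, Finset.sum_congr rfl fun k _ => hf2 k,
      sum_two_pt a n hd, sum_two_pt a n hd, if_neg hd]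
    ring

lemma Jm_commute (α β α' β' : ℂ) :
    (α • (1 : Matrix (Fin N) (Fin N) ℂ) + β • Jm) * (α' • 1 + β' • Jm)
      = (α' • (1 : Matrix (Fin N) (Fin N) ℂ) + β' • Jm) * (α • 1 + β • Jm) := by
  have h : Commute (α • (1 : Matrix (Fin N) (Fin N) ℂ) + β • Jm) (α' • 1 + β' • Jm) := by
    refine Commute.add_left ?_ ?_
    · refine Commute.add_right ?_ ?_
      · exact ((Commute.refl (1 : Matrix (Fin N) (Fin N) ℂ)).smul_left α).smul_right α'
      · exact ((Commute.one_left (Jm : Matrix (Fin N) (Fin N) ℂ)).smul_left α).smul_right β'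
    · refine Commute.add_right ?_ ?_
      · exact ((Commute.one_right (Jm : Matrix (Fin N) (Fin N) ℂ)).smul_left β).smul_right α'
      · exact ((Commute.refl (Jm : Matrix (Fin N) (Fin N) ℂ)).smul_left β).smul_right β'
  exact h

end GAux

/-- For the state-comparison operators, the commutator `[γ1, γ1 γ2 γ1]` vanishes. -/
theorem commutator_gamma1_g1g2g1 (d N : ℕ) (hN : 2 ≤ N) (ψ : Fin N → Fin d → ℂ)
    (hnorm : ∀ k, star (ψ k) ⬝ᵥ ψ k = 1)
    (c : ℝ) (hc0 : 0 < c) (hc1 : c < 1)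
    (hoverlap : ∀ i j, i ≠ j → star (ψ i) ⬝ᵥ ψ j = (c : ℂ)) :
    gammaOne ψ * (gammaOne ψ * gammaTwo ψ * gammaOne ψ) =
      (gammaOne ψ * gammaTwo ψ * gammaOne ψ) * gammaOne ψ := by
  have hov : ∀ i j, GAux.ov ψ i j = if i = j then 1 else (c : ℂ) := by
    intro i j
    by_cases h : i = j
    · simp [GAux.ov, h, hnorm]
    · simp [GAux.ov, h, hoverlap i j h]
  have hg1 : gammaOne ψ = ((N : ℂ) ^ 2)⁻¹ • GAux.Phi ψ 1 := by
    rw [gammaOne, GAux.Phi_one]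
  have hX : ∃ t : ℂ, gammaOne ψ * gammaTwo ψ * gammaOne ψ = t • GAux.Phi ψ (GAux.Wm ψ) := by
    refine ⟨((N : ℂ) ^ 2)⁻¹ * (((N : ℂ) ^ 2)⁻¹ * ((N : ℂ) ^ 2)⁻¹), ?_⟩
    rw [gammaOne, gammaTwo]
    simp only [smul_mul_assoc, mul_smul_comm, smul_smul]
    rw [GAux.core]
  obtain ⟨t, ht⟩ := hX
  have hcomm : GAux.Hm ψ * GAux.Wm ψ = GAux.Wm ψ * GAux.Hm ψ := by
    rw [GAux.Hm_eq ψ (c : ℂ) hov, GAux.Wm_eq ψ (c : ℂ) hov]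
    exact GAux.Jm_commute _ _ _ _
  rw [ht, hg1, smul_mul_assoc, smul_mul_assoc, mul_smul_comm, mul_smul_comm, smul_smul,
    smul_smul, GAux.Phi_mul, GAux.Phi_mul, Matrix.one_mul, Matrix.mul_one, mul_comm t,
    hcomm]
end

section
/- Let N ≥ 2 and let ψ_1, …, ψ_N be unit vectors in ℂ^d with ⟨ψ_i, ψ_j⟩ = c for all i ≠ j, where c is real with 0 < c < 1. With γ1 = N⁻² Σ_k P_k ⊗ P_k and γ2 = N⁻² Σ_{k≠l} P_k ⊗ P_l as above, the commutator [γ1, γ1 γ2² γ1] vanishes: γ1 (γ1 γ2² γ1) = (γ1 γ2² γ1) γ1. -/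
open Matrix Kronecker

section Aux

variable {d N : ℕ}

/-- overlap scalar -/
noncomputable def sOf (ψ : Fin N → Fin d → ℂ) (i j : Fin N) : ℂ := star (ψ i) ⬝ᵥ ψ j

/-- basic rank-one kronecker block -/
noncomputable def KK (ψ : Fin N → Fin d → ℂ) (k l m n : Fin N) :
    Matrix (Fin d × Fin d) (Fin d × Fin d) ℂ :=
  Matrix.vecMulVec (ψ k) (star (ψ m)) ⊗ₖ Matrix.vecMulVec (ψ l) (star (ψ n))

lemma vecMulVec_mul_vecMulVec' (u v w x : Fin d → ℂ) :
    Matrix.vecMulVec u v * Matrix.vecMulVec w x = (v ⬝ᵥ w) • Matrix.vecMulVec u x := by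
  ext i j
  simp only [Matrix.mul_apply, Matrix.vecMulVec_apply, Matrix.smul_apply, smul_eq_mul,
    dotProduct, Finset.sum_mul]
  exact Finset.sum_congr rfl fun k _ => by ring

lemma KK_mul (ψ : Fin N → Fin d → ℂ) (k l m n k' l' m' n' : Fin N) :
    KK ψ k l m n * KK ψ k' l' m' n' =
      (sOf ψ m k' * sOf ψ n l') • KK ψ k l m' n' := by
  unfold KK sOf
  rw [← Matrix.mul_kronecker_mul, vecMulVec_mul_vecMulVec', vecMulVec_mul_vecMulVec',
    Matrix.smul_kronecker, Matrix.kronecker_smul, smul_smul]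

/-- the off-diagonal index set -/
noncomputable def offD (N : ℕ) : Finset (Fin N × Fin N) :=
  Finset.univ.filter (fun p : Fin N × Fin N => p.1 ≠ p.2)

/-- the central scalar function -/
noncomputable def Ffun (ψ : Fin N → Fin d → ℂ) (x y : Fin N) : ℂ :=
  ∑ p ∈ offD N, ∑ q ∈ offD N,
    sOf ψ p.1 q.1 * sOf ψ p.2 q.2 * (sOf ψ x p.1 * sOf ψ x p.2) *
      (sOf ψ q.1 y * sOf ψ q.2 y)

variable {ψ : Fin N → Fin d → ℂ} {c : ℝ}
variable (hs : ∀ i j, sOf ψ i j = if i = j then 1 else (c : ℂ))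

include hs

lemma sOf_symm (i j : Fin N) : sOf ψ i j = sOf ψ j i := by
  rw [hs, hs]; simp [eq_comm]

lemma sOf_perm (σ : Equiv.Perm (Fin N)) (i j : Fin N) :
    sOf ψ (σ i) (σ j) = sOf ψ i j := by
  rw [hs, hs]; simp [σ.injective.eq_iff]

lemma Ffun_perm (σ : Equiv.Perm (Fin N)) (x y : Fin N) :
    Ffun ψ (σ x) (σ y) = Ffun ψ x y := by
  symm
  unfold Ffun
  refine Finset.sum_equiv (σ.prodCongr σ) (fun p => ?_) (fun p hp => ?_)
  · simp [offD, σ.injective.ne_iff]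
  refine Finset.sum_equiv (σ.prodCongr σ) (fun q => ?_) (fun q hq => ?_)
  · simp [offD, σ.injective.ne_iff]
  simp only [Equiv.prodCongr_apply, Prod.map_fst, Prod.map_snd, sOf_perm hs]

lemma Ffun_symm (x y : Fin N) : Ffun ψ x y = Ffun ψ y x := by
  unfold Ffun
  rw [Finset.sum_comm]
  refine Finset.sum_congr rfl fun p _ => Finset.sum_congr rfl fun q _ => ?_
  rw [sOf_symm hs q.1 p.1, sOf_symm hs q.2 p.2, sOf_symm hs x q.1, sOf_symm hs x q.2,
    sOf_symm hs p.1 y, sOf_symm hs p.2 y]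
  ring

lemma Ffun_rowsum (x y : Fin N) :
    ∑ a, Ffun ψ x a = ∑ a, Ffun ψ y a := by
  have h := Equiv.sum_comp (Equiv.swap x y) (fun a => Ffun ψ x a)
  rw [← h]
  refine Finset.sum_congr rfl fun a _ => ?_
  have : Ffun ψ x (Equiv.swap x y a) = Ffun ψ ((Equiv.swap x y) y) (Equiv.swap x y a) := by
    rw [Equiv.swap_apply_right]
  rw [this, Ffun_perm hs]

lemma key_scalar (x y : Fin N) :
    ∑ a, Ffun ψ a y * (sOf ψ x a * sOf ψ x a) =
      ∑ b, Ffun ψ x b * (sOf ψ b y * sOf ψ b y) := by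
  have expand : ∀ (t : Fin N → ℂ) (z : Fin N),
      ∑ a, t a * (sOf ψ z a * sOf ψ z a) =
        (1 - (c:ℂ)*c) * t z + (c:ℂ)*c * ∑ a, t a := by
    intro t z
    have : ∀ a : Fin N, t a * (sOf ψ z a * sOf ψ z a) =
        (if z = a then (1 - (c:ℂ)*c) * t a else 0) + (c:ℂ)*c * t a := by
      intro a
      rw [hs]
      split <;> ring
    rw [Finset.sum_congr rfl fun a _ => this a, Finset.sum_add_distrib,
      Finset.sum_ite_eq, ← Finset.mul_sum]
    simp
  have hsym : ∀ a, sOf ψ x a = sOf ψ a x := fun a => sOf_symm hs x a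
  calc ∑ a, Ffun ψ a y * (sOf ψ x a * sOf ψ x a)
      = ∑ a, Ffun ψ a y * (sOf ψ x a * sOf ψ x a) := rfl
    _ = (1 - (c:ℂ)*c) * Ffun ψ x y + (c:ℂ)*c * ∑ a, Ffun ψ a y :=
        expand (fun a => Ffun ψ a y) x
    _ = (1 - (c:ℂ)*c) * Ffun ψ x y + (c:ℂ)*c * ∑ b, Ffun ψ x b := by
        congr 1
        have h1 : ∑ a, Ffun ψ a y = ∑ a, Ffun ψ y a :=
          Finset.sum_congr rfl fun a _ => Ffun_symm hs a y
        rw [h1, Ffun_rowsum hs y x]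
    _ = ∑ b, Ffun ψ x b * (sOf ψ b y * sOf ψ b y) := by
        have h2 : ∀ b : Fin N, Ffun ψ x b * (sOf ψ b y * sOf ψ b y) =
            Ffun ψ x b * (sOf ψ y b * sOf ψ y b) := fun b => by rw [sOf_symm hs b y]
        rw [Finset.sum_congr rfl fun b _ => h2 b, expand (fun b => Ffun ψ x b) y]


omit hs in
lemma rearrange3 {ι κ ρ M : Type*} [AddCommMonoid M] [Module ℂ M]
    (s : Finset ι) (t : Finset κ) (u : Finset ρ) (C : ι → κ → ρ → ℂ) (X : ρ → M) :
    (∑ p ∈ s, ∑ q ∈ t, ∑ b ∈ u, C p q b • X b) =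
      ∑ b ∈ u, (∑ p ∈ s, ∑ q ∈ t, C p q b) • X b := by
  rw [Finset.sum_congr rfl fun p _ => Finset.sum_comm, Finset.sum_comm]
  exact Finset.sum_congr rfl fun b _ => by
    rw [Finset.sum_smul]
    exact Finset.sum_congr rfl fun p _ => (Finset.sum_smul).symm

omit hs in
lemma rearrange2 {ι ρ M : Type*} [AddCommMonoid M] [Module ℂ M]
    (s : Finset ι) (u : Finset ρ) (C : ι → ρ → ℂ) (X : ρ → M) :
    (∑ a ∈ s, ∑ b ∈ u, C a b • X b) = ∑ b ∈ u, (∑ a ∈ s, C a b) • X b := by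
  rw [Finset.sum_comm]
  exact Finset.sum_congr rfl fun b _ => (Finset.sum_smul).symm

lemma main_comm :
    (∑ k, KK ψ k k k k) *
      ((∑ k, KK ψ k k k k) *
        ((∑ p ∈ offD N, KK ψ p.1 p.2 p.1 p.2) * (∑ p ∈ offD N, KK ψ p.1 p.2 p.1 p.2)) *
        (∑ k, KK ψ k k k k)) =
    ((∑ k, KK ψ k k k k) *
        ((∑ p ∈ offD N, KK ψ p.1 p.2 p.1 p.2) * (∑ p ∈ offD N, KK ψ p.1 p.2 p.1 p.2)) *
        (∑ k, KK ψ k k k k)) *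
      (∑ k, KK ψ k k k k) := by
  set G1 : Matrix (Fin d × Fin d) (Fin d × Fin d) ℂ := ∑ k, KK ψ k k k k with hG1
  set G2 : Matrix (Fin d × Fin d) (Fin d × Fin d) ℂ := ∑ p ∈ offD N, KK ψ p.1 p.2 p.1 p.2 with hG2
  have hG2sq : G2 * G2 = ∑ p ∈ offD N, ∑ q ∈ offD N,
      (sOf ψ p.1 q.1 * sOf ψ p.2 q.2) • KK ψ p.1 p.2 q.1 q.2 := by
    rw [hG2, Finset.sum_mul_sum]
    exact Finset.sum_congr rfl fun p _ => Finset.sum_congr rfl fun q _ =>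
      KK_mul ψ _ _ _ _ _ _ _ _
  have step2 : G1 * (G2 * G2) = ∑ a, ∑ p ∈ offD N, ∑ q ∈ offD N,
      ((sOf ψ p.1 q.1 * sOf ψ p.2 q.2) * (sOf ψ a p.1 * sOf ψ a p.2)) •
        KK ψ a a q.1 q.2 := by
    rw [hG2sq, hG1, Finset.sum_mul_sum]
    refine Finset.sum_congr rfl fun a _ => Finset.sum_congr rfl fun p _ => ?_
    rw [Finset.mul_sum]
    refine Finset.sum_congr rfl fun q _ => ?_
    rw [mul_smul_comm, KK_mul, smul_smul]
  have step3 : G1 * (G2 * G2) * G1 = ∑ a, ∑ p ∈ offD N, ∑ q ∈ offD N, ∑ b,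
      (sOf ψ p.1 q.1 * sOf ψ p.2 q.2 * (sOf ψ a p.1 * sOf ψ a p.2) *
        (sOf ψ q.1 b * sOf ψ q.2 b)) • KK ψ a a b b := by
    rw [step2, hG1, Finset.sum_mul]
    refine Finset.sum_congr rfl fun a _ => ?_
    rw [Finset.sum_mul]
    refine Finset.sum_congr rfl fun p _ => ?_
    rw [Finset.sum_mul]
    refine Finset.sum_congr rfl fun q _ => ?_
    rw [Finset.mul_sum]
    refine Finset.sum_congr rfl fun b _ => ?_
    rw [smul_mul_assoc, KK_mul, smul_smul]
  have hT : G1 * (G2 * G2) * G1 = ∑ a, ∑ b, Ffun ψ a b • KK ψ a a b b := by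
    rw [step3]
    refine Finset.sum_congr rfl fun a _ => ?_
    simp only [Ffun]
    exact rearrange3 (offD N) (offD N) Finset.univ
      (fun p q b => sOf ψ p.1 q.1 * sOf ψ p.2 q.2 * (sOf ψ a p.1 * sOf ψ a p.2) *
        (sOf ψ q.1 b * sOf ψ q.2 b)) (fun b => KK ψ a a b b)
  have hL : G1 * (G1 * (G2 * G2) * G1) =
      ∑ x, ∑ y, (∑ a, Ffun ψ a y * (sOf ψ x a * sOf ψ x a)) • KK ψ x x y y := by
    rw [hT, hG1, Finset.sum_mul_sum]
    refine Finset.sum_congr rfl fun x _ => ?_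
    have : ∀ a : Fin N, (KK ψ x x x x) * (∑ b, Ffun ψ a b • KK ψ a a b b) =
        ∑ b, (Ffun ψ a b * (sOf ψ x a * sOf ψ x a)) • KK ψ x x b b := by
      intro a
      rw [Finset.mul_sum]
      refine Finset.sum_congr rfl fun b _ => ?_
      rw [mul_smul_comm, KK_mul, smul_smul]
    rw [Finset.sum_congr rfl fun a _ => this a]
    exact rearrange2 Finset.univ Finset.univ
      (fun a b => Ffun ψ a b * (sOf ψ x a * sOf ψ x a)) (fun b => KK ψ x x b b)
  have hR : (G1 * (G2 * G2) * G1) * G1 =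
      ∑ x, ∑ y, (∑ b, Ffun ψ x b * (sOf ψ b y * sOf ψ b y)) • KK ψ x x y y := by
    rw [hT, hG1, Finset.sum_mul]
    refine Finset.sum_congr rfl fun x _ => ?_
    have : ∀ b : Fin N, (Ffun ψ x b • KK ψ x x b b) * (∑ e, KK ψ e e e e) =
        ∑ e, (Ffun ψ x b * (sOf ψ b e * sOf ψ b e)) • KK ψ x x e e := by
      intro b
      rw [Finset.mul_sum]
      refine Finset.sum_congr rfl fun e _ => ?_
      rw [smul_mul_assoc, KK_mul, smul_smul]
    rw [Finset.sum_mul, Finset.sum_congr rfl fun b _ => this b]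
    exact rearrange2 Finset.univ Finset.univ
      (fun b e => Ffun ψ x b * (sOf ψ b e * sOf ψ b e)) (fun e => KK ψ x x e e)
  rw [hL, hR]
  exact Finset.sum_congr rfl fun x _ => Finset.sum_congr rfl fun y _ => by
    rw [key_scalar hs x y]

end Aux

/-- For the state-comparison operators, the commutator `[γ1, γ1 γ2² γ1]` vanishes. -/
theorem commutator_gamma1_g1g2sqg1 (d N : ℕ) (hN : 2 ≤ N) (ψ : Fin N → Fin d → ℂ)
    (hnorm : ∀ k, star (ψ k) ⬝ᵥ ψ k = 1)
    (c : ℝ) (hc0 : 0 < c) (hc1 : c < 1)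
    (hoverlap : ∀ i j, i ≠ j → star (ψ i) ⬝ᵥ ψ j = (c : ℂ)) :
    gammaOne ψ * (gammaOne ψ * gammaTwo ψ ^ 2 * gammaOne ψ) =
      (gammaOne ψ * gammaTwo ψ ^ 2 * gammaOne ψ) * gammaOne ψ := by
  have hs : ∀ i j, sOf ψ i j = if i = j then 1 else (c : ℂ) := by
    intro i j
    by_cases h : i = j
    · subst h; simp [sOf, hnorm]
    · simp [sOf, h, hoverlap i j h]
  have hG1 : gammaOne ψ = ((N : ℂ) ^ 2)⁻¹ • ∑ k, KK ψ k k k k := rfl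
  have hG2 : gammaTwo ψ = ((N : ℂ) ^ 2)⁻¹ • ∑ p ∈ offD N, KK ψ p.1 p.2 p.1 p.2 := rfl
  rw [hG1, hG2,
    pow_two (((N : ℂ) ^ 2)⁻¹ • ∑ p ∈ offD N, KK ψ p.1 p.2 p.1 p.2)]
  simp only [smul_mul_assoc, mul_smul_comm, smul_smul]
  rw [main_comm hs]
  congr 1
  ring
end

section
/- Let N ≥ 2 and let ψ_1, …, ψ_N be unit vectors in ℂ^d with ⟨ψ_i, ψ_j⟩ = c for all i ≠ j, where c is real with 0 < c < 1. With γ1 = N⁻² Σ_k P_k ⊗ P_k and γ2 = N⁻² Σ_{k≠l} P_k ⊗ P_l as above, the commutator [γ2, γ2 γ1² γ2] vanishes; equivalently, the matrix γ2 (γ2 + γ1) γ1² γ2 is self-adjoint. -/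
open Matrix Kronecker

namespace G2C
open Finset

variable {n : Type*} [Fintype n] [DecidableEq n]

theorem mul_vmv (A : Matrix n n ℂ) (x y : n → ℂ) :
    A * vecMulVec x y = vecMulVec (A *ᵥ x) y := by
  ext i j
  simp [Matrix.mul_apply, vecMulVec_apply, Matrix.mulVec, dotProduct,
    Finset.sum_mul, mul_assoc]

theorem vmv_mul (A : Matrix n n ℂ) (x y : n → ℂ) :
    vecMulVec x y * A = vecMulVec x (y ᵥ* A) := by
  ext i j
  simp [Matrix.mul_apply, vecMulVec_apply, Matrix.vecMul, dotProduct,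
    Finset.mul_sum, mul_assoc]

theorem vmv_mul_vmv (x y z w : n → ℂ) :
    vecMulVec x y * vecMulVec z w = (y ⬝ᵥ z) • vecMulVec x w := by
  ext i j
  simp [Matrix.mul_apply, vecMulVec_apply, dotProduct, Finset.sum_mul]
  ring_nf
  exact Finset.sum_congr rfl fun k _ => by ring

theorem vmv_mulVec (x y z : n → ℂ) :
    vecMulVec x y *ᵥ z = (y ⬝ᵥ z) • x := by
  ext i
  simp only [Matrix.mulVec, vecMulVec_apply, dotProduct, Pi.smul_apply,
    smul_eq_mul, Finset.sum_mul]
  exact Finset.sum_congr rfl fun k _ => by ring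

theorem vmv_add_right (x y z : n → ℂ) :
    vecMulVec x (y + z) = vecMulVec x y + vecMulVec x z := by
  ext i j; simp [vecMulVec_apply, mul_add]

theorem vmv_smul_right (s : ℂ) (x y : n → ℂ) :
    vecMulVec x (s • y) = s • vecMulVec x y := by
  ext i j; simp [vecMulVec_apply]; ring

theorem vmv_add_left (x y z : n → ℂ) :
    vecMulVec (x + y) z = vecMulVec x z + vecMulVec y z := by
  ext i j; simp [vecMulVec_apply, add_mul]

theorem vmv_smul_left (s : ℂ) (x y : n → ℂ) :
    vecMulVec (s • x) y = s • vecMulVec x y := by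
  ext i j; simp [vecMulVec_apply]; ring

theorem vmv_sum_left {ι : Type*} (s : Finset ι) (f : ι → n → ℂ) (y : n → ℂ) :
    vecMulVec (∑ i ∈ s, f i) y = ∑ i ∈ s, vecMulVec (f i) y := by
  ext i j; simp [vecMulVec_apply, Finset.sum_mul, Matrix.sum_apply]

theorem vmv_sum_right {ι : Type*} (s : Finset ι) (x : n → ℂ) (f : ι → n → ℂ) :
    vecMulVec x (∑ i ∈ s, f i) = ∑ i ∈ s, vecMulVec x (f i) := by
  ext i j; simp [vecMulVec_apply, Finset.mul_sum, Matrix.sum_apply]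

theorem mulVec_sum {ι : Type*} (A : Matrix n n ℂ) (s : Finset ι)
    (f : ι → n → ℂ) : A *ᵥ (∑ i ∈ s, f i) = ∑ i ∈ s, A *ᵥ f i := by
  ext i
  simp [Matrix.mulVec, dotProduct, Finset.mul_sum]
  rw [Finset.sum_comm]

theorem sum_matrix_mulVec {ι : Type*} (s : Finset ι)
    (M : ι → Matrix n n ℂ) (x : n → ℂ) :
    (∑ i ∈ s, M i) *ᵥ x = ∑ i ∈ s, M i *ᵥ x := by
  ext j
  simp only [Matrix.mulVec, dotProduct, Matrix.sum_apply, Finset.sum_mul,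
    Finset.sum_apply]
  rw [Finset.sum_comm]

end G2C

namespace G2C
open Finset Matrix Kronecker

variable {d N : ℕ}

/-- the product vector `ψ k ⊗ ψ l` -/
def vv (ψ : Fin N → Fin d → ℂ) (k l : Fin N) : Fin d × Fin d → ℂ :=
  fun p => ψ k p.1 * ψ l p.2

/-- the off-diagonal index set -/
def off (N : ℕ) : Finset (Fin N × Fin N) :=
  Finset.univ.filter (fun p : Fin N × Fin N => p.1 ≠ p.2)

theorem mem_off {p : Fin N × Fin N} : p ∈ off N ↔ p.1 ≠ p.2 := by
  simp [off]

/-- the Gram matrix entries -/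
noncomputable def Gc (c : ℝ) (i j : Fin N) : ℂ := if i = j then 1 else (c : ℂ)

theorem Gc_symm (c : ℝ) (i j : Fin N) : Gc c i j = Gc c j i := by
  simp [Gc, eq_comm]

theorem Gc_real (c : ℝ) (i j : Fin N) : star (Gc c i j) = Gc c i j := by
  unfold Gc; split <;> simp

theorem kron_eq (ψ : Fin N → Fin d → ℂ) (k l : Fin N) :
    projOf ψ k ⊗ₖ projOf ψ l = vecMulVec (vv ψ k l) (star (vv ψ k l)) := by
  ext ⟨a, b⟩ ⟨a', b'⟩
  simp [projOf, vecMulVec_apply, vv, star_mul']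
  ring

theorem dot_vv (ψ : Fin N → Fin d → ℂ) (k l m n : Fin N) :
    star (vv ψ k l) ⬝ᵥ vv ψ m n =
      (star (ψ k) ⬝ᵥ ψ m) * (star (ψ l) ⬝ᵥ ψ n) := by
  simp only [dotProduct, Pi.star_apply, vv, Fintype.sum_prod_type, star_mul',
    Finset.sum_mul, Finset.mul_sum]
  rw [Finset.sum_comm]
  refine Finset.sum_congr rfl fun a _ => Finset.sum_congr rfl fun b _ => by ring

section withGram

variable (ψ : Fin N → Fin d → ℂ) (c : ℝ)
variable (hnorm : ∀ k, star (ψ k) ⬝ᵥ ψ k = 1)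
variable (hoverlap : ∀ i j, i ≠ j → star (ψ i) ⬝ᵥ ψ j = (c : ℂ))

include hnorm hoverlap in
theorem dotG (i j : Fin N) : star (ψ i) ⬝ᵥ ψ j = Gc c i j := by
  unfold Gc
  by_cases h : i = j
  · subst h; simp [hnorm i]
  · simp [h, hoverlap i j h]

include hnorm hoverlap in
theorem dot_vv' (k l m n : Fin N) :
    star (vv ψ k l) ⬝ᵥ vv ψ m n = Gc c k m * Gc c l n := by
  rw [dot_vv, dotG ψ c hnorm hoverlap, dotG ψ c hnorm hoverlap]

end withGram

end G2C

namespace G2C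
open Finset Matrix

variable {N : ℕ}

noncomputable def sS (N : ℕ) (c : ℝ) : ℂ := (N : ℂ) * c + 1 - c
noncomputable def A2 (N : ℕ) (c : ℝ) : ℂ := (N : ℂ) * c ^ 2 + 2 * (c - (c:ℂ) ^ 2)
noncomputable def Hh (N : ℕ) (c : ℝ) : ℂ := (N : ℂ) * c ^ 2 + (1 - (c:ℂ) ^ 2)

/-- indicator coefficient for the vector `r k` -/
def ind (p : Fin N × Fin N) (k : Fin N) : ℂ :=
  (if p.1 = k then 1 else 0) + (if p.2 = k then 1 else 0)

theorem aux_one (k : Fin N) (g : Fin N → ℂ) :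
    ∑ j, (if j = k then (1:ℂ) else 0) * g j = g k := by
  simp [ite_mul, Finset.sum_ite_eq']

theorem S1 (c : ℝ) (i : Fin N) : ∑ j, Gc c i j = sS N c := by
  have h : ∀ j, Gc c i j = (c : ℂ) + if i = j then 1 - (c:ℂ) else 0 := by
    intro j; unfold Gc; split <;> simp
  simp only [h, Finset.sum_add_distrib, Finset.sum_const, Finset.card_univ,
    Fintype.card_fin, nsmul_eq_mul, Finset.sum_ite_eq, Finset.mem_univ, if_true]
  unfold sS; ring

theorem S2 (c : ℝ) {i i' : Fin N} (h : i ≠ i') :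
    ∑ j, Gc c i j * Gc c i' j = A2 N c := by
  have key : ∀ j, Gc c i j * Gc c i' j =
      (c:ℂ)^2 + ((if i = j then (c:ℂ) - c^2 else 0) + (if i' = j then (c:ℂ) - c^2 else 0)) := by
    intro j
    unfold Gc
    by_cases h1 : i = j <;> by_cases h2 : i' = j
    · exact absurd (h1.trans h2.symm) h
    · simp [h1, h2]; try ring
    · simp [h1, h2]; try ring
    · simp [h1, h2]; try ring
  simp only [key, Finset.sum_add_distrib, Finset.sum_const, Finset.card_univ,
    Fintype.card_fin, nsmul_eq_mul, Finset.sum_ite_eq, Finset.mem_univ, if_true]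
  unfold A2; ring

theorem S3 (c : ℝ) (j : Fin N) : ∑ k, Gc c k j * Gc c k j = Hh N c := by
  have key : ∀ k, Gc c k j * Gc c k j = (c:ℂ)^2 + (if k = j then 1 - (c:ℂ)^2 else 0) := by
    intro k; unfold Gc; split <;> (simp; try ring)
  simp only [key, Finset.sum_add_distrib, Finset.sum_const, Finset.card_univ,
    Fintype.card_fin, nsmul_eq_mul, Finset.sum_ite_eq', Finset.mem_univ, if_true]
  unfold Hh; ring

theorem sum_off (f : Fin N × Fin N → ℂ) :
    ∑ p ∈ off N, f p = (∑ p : Fin N × Fin N, f p) - ∑ k, f (k, k) := by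
  have h := Finset.sum_filter_add_sum_filter_not (Finset.univ : Finset (Fin N × Fin N))
    (fun p => p.1 ≠ p.2) f
  have hdiag : ∑ p ∈ Finset.univ.filter (fun p : Fin N × Fin N => ¬ p.1 ≠ p.2), f p
      = ∑ k, f (k, k) := by
    rw [Finset.sum_filter, Fintype.sum_prod_type]
    simp only [not_not]
    refine Finset.sum_congr rfl fun a _ => ?_
    simp [Finset.sum_ite_eq]
  rw [off, ← h, hdiag]; ring
  
theorem SC1 (c : ℝ) {m n : Fin N} (h : m ≠ n) :
    ∑ q ∈ off N, Gc c m q.1 * Gc c n q.2 = sS N c ^ 2 - A2 N c := by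
  rw [sum_off]
  have h1 : ∑ q : Fin N × Fin N, Gc c m q.1 * Gc c n q.2 = sS N c * sS N c := by
    rw [Fintype.sum_prod_type, ← Finset.sum_mul_sum, S1 c m, S1 c n]
  have h2 : ∑ k, Gc c m k * Gc c n k = A2 N c := S2 c h
  rw [h1, h2]; ring

theorem SC2 (c : ℝ) (k m n : Fin N) :
    ∑ q ∈ off N, ind q k * (Gc c m q.1 * Gc c n q.2)
      = sS N c * (Gc c m k + Gc c n k) - 2 * (Gc c m k * Gc c n k) := by
  simp only [ind, add_mul, Finset.sum_add_distrib]
  rw [sum_off, sum_off]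
  have hd1 : ∑ j : Fin N, (if j = k then (1:ℂ) else 0) * (Gc c m j * Gc c n j)
      = Gc c m k * Gc c n k := aux_one k _
  have h1 : ∑ q : Fin N × Fin N, (if q.1 = k then (1:ℂ) else 0) * (Gc c m q.1 * Gc c n q.2)
      = Gc c m k * sS N c := by
    rw [Fintype.sum_prod_type]
    have inner : ∀ q1 : Fin N, ∑ q2, (if q1 = k then (1:ℂ) else 0) * (Gc c m q1 * Gc c n q2)
        = (if q1 = k then (1:ℂ) else 0) * (Gc c m q1 * sS N c) := by
      intro q1
      rw [← S1 c n, Finset.mul_sum, Finset.mul_sum]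
      try exact Finset.sum_congr rfl fun q2 _ => by ring
    simp only [inner]
    try rw [aux_one k (fun q1 => Gc c m q1 * sS N c)]
  have h2 : ∑ q : Fin N × Fin N, (if q.2 = k then (1:ℂ) else 0) * (Gc c m q.1 * Gc c n q.2)
      = sS N c * Gc c n k := by
    rw [Fintype.sum_prod_type]
    have inner : ∀ q1 : Fin N, ∑ q2, (if q2 = k then (1:ℂ) else 0) * (Gc c m q1 * Gc c n q2)
        = Gc c m q1 * Gc c n k := by
      intro q1
      have := aux_one k (fun q2 => Gc c m q1 * Gc c n q2)
      simpa using this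
    simp only [inner]
    rw [← Finset.sum_mul, S1 c m]
  rw [h1, h2, hd1]
  ring

end G2C

namespace G2C
open Finset Matrix Kronecker

variable {d N : ℕ}

noncomputable def n2 (N : ℕ) : ℂ := ((N : ℂ) ^ 2)⁻¹

noncomputable def tv (ψ : Fin N → Fin d → ℂ) : Fin d × Fin d → ℂ :=
  ∑ q ∈ off N, vv ψ q.1 q.2

noncomputable def rv (ψ : Fin N → Fin d → ℂ) (k : Fin N) : Fin d × Fin d → ℂ :=
  ∑ q ∈ off N, ind q k • vv ψ q.1 q.2

theorem g2_eq (ψ : Fin N → Fin d → ℂ) :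
    gammaTwo ψ = n2 N • ∑ p ∈ off N,
      vecMulVec (vv ψ p.1 p.2) (star (vv ψ p.1 p.2)) := by
  unfold gammaTwo n2 off
  congr 1
  exact Finset.sum_congr rfl fun p _ => kron_eq ψ p.1 p.2

theorem g1_eq (ψ : Fin N → Fin d → ℂ) :
    gammaOne ψ = n2 N • ∑ k, vecMulVec (vv ψ k k) (star (vv ψ k k)) := by
  unfold gammaOne n2
  congr 1
  exact Finset.sum_congr rfl fun k _ => kron_eq ψ k k

theorem g2_apply (ψ : Fin N → Fin d → ℂ) (x : Fin d × Fin d → ℂ) :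
    gammaTwo ψ *ᵥ x = n2 N • ∑ p ∈ off N,
      (star (vv ψ p.1 p.2) ⬝ᵥ x) • vv ψ p.1 p.2 := by
  rw [g2_eq, Matrix.smul_mulVec, sum_matrix_mulVec]
  congr 1
  exact Finset.sum_congr rfl fun p _ => vmv_mulVec _ _ _

section withGram

variable (ψ : Fin N → Fin d → ℂ) (c : ℝ)
variable (hnorm : ∀ k, star (ψ k) ⬝ᵥ ψ k = 1)
variable (hoverlap : ∀ i j, i ≠ j → star (ψ i) ⬝ᵥ ψ j = (c : ℂ))

include hnorm hoverlap

theorem g2_vv (k l : Fin N) :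
    gammaTwo ψ *ᵥ vv ψ k l = n2 N • ∑ p ∈ off N,
      (Gc c p.1 k * Gc c p.2 l) • vv ψ p.1 p.2 := by
  rw [g2_apply]
  congr 1
  exact Finset.sum_congr rfl fun p _ => by
    rw [dot_vv' ψ c hnorm hoverlap]

theorem g2_t : gammaTwo ψ *ᵥ tv ψ = (n2 N * (sS N c ^ 2 - A2 N c)) • tv ψ := by
  rw [tv, mulVec_sum]
  rw [Finset.sum_congr rfl (fun q (_ : q ∈ off N) => g2_vv ψ c hnorm hoverlap q.1 q.2)]
  simp only [Finset.smul_sum]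
  rw [Finset.sum_comm]
  refine Finset.sum_congr rfl fun p hp => ?_
  rw [← Finset.smul_sum, ← Finset.sum_smul]
  have hcoef : ∑ q ∈ off N, Gc c p.1 q.1 * Gc c p.2 q.2 = sS N c ^ 2 - A2 N c :=
    SC1 c (mem_off.mp hp)
  rw [hcoef, smul_smul]

end withGram

theorem PW3 (c : ℝ) {p : Fin N × Fin N} (h : p.1 ≠ p.2) (k : Fin N) :
    Gc c p.1 k * Gc c p.2 k = (c:ℂ)^2 + ((c:ℂ) - (c:ℂ)^2) * ind p k := by
  unfold Gc ind
  by_cases h1 : p.1 = k <;> by_cases h2 : p.2 = k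
  · exact absurd (h1.trans h2.symm) h
  · simp [h1, h2]; try ring
  · simp [h1, h2]; try ring
  · simp [h1, h2]; try ring

theorem PW2 (c : ℝ) {p : Fin N × Fin N} (h : p.1 ≠ p.2) (k : Fin N) :
    sS N c * (Gc c p.1 k + Gc c p.2 k) - 2 * (Gc c p.1 k * Gc c p.2 k)
      = (2*c*sS N c - 2*(c:ℂ)^2) + ((1-(c:ℂ))*(sS N c - 2*c)) * ind p k := by
  unfold Gc ind
  by_cases h1 : p.1 = k <;> by_cases h2 : p.2 = k
  · exact absurd (h1.trans h2.symm) h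
  · simp [h1, h2]; try ring
  · simp [h1, h2]; try ring
  · simp [h1, h2]; try ring

theorem sum_r (ψ : Fin N → Fin d → ℂ) : ∑ k, rv ψ k = (2:ℂ) • tv ψ := by
  unfold rv tv
  rw [Finset.sum_comm, Finset.smul_sum]
  refine Finset.sum_congr rfl fun q _ => ?_
  rw [← Finset.sum_smul]
  congr 1
  unfold ind
  rw [Finset.sum_add_distrib]
  simp [Finset.sum_ite_eq]
  norm_num

noncomputable def Lam (N : ℕ) (c : ℝ) : ℂ := n2 N * (sS N c ^ 2 - A2 N c)
noncomputable def Uc (N : ℕ) (c : ℝ) : ℂ := n2 N * (2*c*sS N c - 2*(c:ℂ)^2)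
noncomputable def Wcc (N : ℕ) (c : ℝ) : ℂ := n2 N * ((1-(c:ℂ))*(sS N c - 2*c))
noncomputable def Phi (N : ℕ) (c : ℝ) : ℂ :=
  n2 N * (c:ℂ)^2 * Lam N c + n2 N * ((c:ℂ)-(c:ℂ)^2) * Uc N c - Wcc N c * (n2 N * (c:ℂ)^2)
noncomputable def nuC (N : ℕ) (c : ℝ) : ℂ := n2 N * ((N:ℂ)*(c:ℂ)^2 + 2*((c:ℂ)-(c:ℂ)^2))


end G2C

namespace G2C
open Finset Matrix

variable {d N : ℕ}

section withGram

variable (ψ : Fin N → Fin d → ℂ) (c : ℝ)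
variable (hnorm : ∀ k, star (ψ k) ⬝ᵥ ψ k = 1)
variable (hoverlap : ∀ i j, i ≠ j → star (ψ i) ⬝ᵥ ψ j = (c : ℂ))

include hnorm hoverlap

theorem g2_comb (f : Fin N × Fin N → ℂ) :
    gammaTwo ψ *ᵥ (∑ q ∈ off N, f q • vv ψ q.1 q.2)
      = ∑ p ∈ off N, (n2 N * ∑ q ∈ off N, f q * (Gc c p.1 q.1 * Gc c p.2 q.2))
          • vv ψ p.1 p.2 := by
  rw [mulVec_sum]
  have h1 : ∀ q ∈ off N, gammaTwo ψ *ᵥ (f q • vv ψ q.1 q.2)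
      = ∑ p ∈ off N, (n2 N * (f q * (Gc c p.1 q.1 * Gc c p.2 q.2))) • vv ψ p.1 p.2 := by
    intro q _
    rw [Matrix.mulVec_smul, g2_vv ψ c hnorm hoverlap q.1 q.2, Finset.smul_sum,
      Finset.smul_sum]
    refine Finset.sum_congr rfl fun p _ => ?_
    simp only [smul_smul]
    congr 1
    ring
  rw [Finset.sum_congr rfl h1, Finset.sum_comm]
  refine Finset.sum_congr rfl fun p _ => ?_
  rw [Finset.mul_sum, Finset.sum_smul]

theorem g2_r (k : Fin N) :
    gammaTwo ψ *ᵥ rv ψ k = Uc N c • tv ψ + Wcc N c • rv ψ k := by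
  rw [rv, g2_comb ψ c hnorm hoverlap (fun q => ind q k)]
  have h1 : ∀ p ∈ off N,
      (n2 N * ∑ q ∈ off N, ind q k * (Gc c p.1 q.1 * Gc c p.2 q.2)) • vv ψ p.1 p.2
      = Uc N c • vv ψ p.1 p.2 + Wcc N c • (ind p k • vv ψ p.1 p.2) := by
    intro p hp
    rw [SC2 c k p.1 p.2, PW2 c (mem_off.mp hp) k]
    simp only [smul_smul, ← add_smul]
    congr 1
    unfold Uc Wcc
    ring
  rw [Finset.sum_congr rfl h1, Finset.sum_add_distrib, ← Finset.smul_sum,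
    ← Finset.smul_sum]
  rfl

theorem g2_vkk (k : Fin N) :
    gammaTwo ψ *ᵥ vv ψ k k
      = (n2 N * (c:ℂ)^2) • tv ψ + (n2 N * ((c:ℂ) - (c:ℂ)^2)) • rv ψ k := by
  rw [g2_vv ψ c hnorm hoverlap k k, Finset.smul_sum]
  have h1 : ∀ p ∈ off N, n2 N • ((Gc c p.1 k * Gc c p.2 k) • vv ψ p.1 p.2)
      = (n2 N * (c:ℂ)^2) • vv ψ p.1 p.2
        + (n2 N * ((c:ℂ) - (c:ℂ)^2)) • (ind p k • vv ψ p.1 p.2) := by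
    intro p hp
    rw [PW3 c (mem_off.mp hp) k]
    simp only [smul_smul, ← add_smul]
    congr 1
    ring
  rw [Finset.sum_congr rfl h1, Finset.sum_add_distrib, ← Finset.smul_sum,
    ← Finset.smul_sum]
  rfl

theorem g2t' : gammaTwo ψ *ᵥ tv ψ = Lam N c • tv ψ := g2_t ψ c hnorm hoverlap

theorem sum_w : ∑ k, (gammaTwo ψ *ᵥ vv ψ k k) = nuC N c • tv ψ := by
  rw [Finset.sum_congr rfl (fun k _ => g2_vkk ψ c hnorm hoverlap k),
    Finset.sum_add_distrib, Finset.sum_const, Finset.card_univ, Fintype.card_fin,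
    ← Finset.smul_sum, sum_r, ← Nat.cast_smul_eq_nsmul ℂ N]
  unfold nuC
  module

theorem g2_w (k : Fin N) :
    gammaTwo ψ *ᵥ (gammaTwo ψ *ᵥ vv ψ k k)
      = Phi N c • tv ψ + Wcc N c • (gammaTwo ψ *ᵥ vv ψ k k) := by
  rw [g2_vkk ψ c hnorm hoverlap k]
  rw [Matrix.mulVec_add, Matrix.mulVec_smul, Matrix.mulVec_smul,
    g2t' ψ c hnorm hoverlap, g2_r ψ c hnorm hoverlap k]
  unfold Phi
  module

end withGram
end G2C

namespace G2C
open Finset Matrix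

variable {d N : ℕ}

theorem star_sum' {ι : Type*} (s : Finset ι) (f : ι → (Fin d × Fin d) → ℂ) :
    ∑ i ∈ s, star (f i) = star (∑ i ∈ s, f i) := by
  ext p
  simp [Finset.sum_apply]

theorem star_Phi (c : ℝ) : star (Phi N c) = Phi N c := by
  simp only [Phi, Lam, Uc, Wcc, n2, sS, A2, Complex.star_def, _root_.map_add,
    _root_.map_mul, _root_.map_sub, _root_.map_pow, map_inv₀, _root_.map_ofNat,
    _root_.map_one, map_natCast, Complex.conj_ofReal]

theorem star_Wcc (c : ℝ) : star (Wcc N c) = Wcc N c := by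
  simp only [Wcc, n2, sS, Complex.star_def, _root_.map_add, _root_.map_mul,
    _root_.map_sub, _root_.map_pow, map_inv₀, _root_.map_ofNat, _root_.map_one,
    map_natCast, Complex.conj_ofReal]

theorem star_nuC (c : ℝ) : star (nuC N c) = nuC N c := by
  simp only [nuC, n2, Complex.star_def, _root_.map_add, _root_.map_mul,
    _root_.map_sub, _root_.map_pow, map_inv₀, _root_.map_ofNat, _root_.map_one,
    map_natCast, Complex.conj_ofReal]

theorem g2herm (ψ : Fin N → Fin d → ℂ) : (gammaTwo ψ).IsHermitian := by
  rw [g2_eq]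
  unfold Matrix.IsHermitian
  rw [Matrix.conjTranspose_smul, Matrix.conjTranspose_sum]
  congr 1
  · simp only [n2, Complex.star_def, map_inv₀, map_pow, map_natCast]
  · refine Finset.sum_congr rfl fun p _ => ?_
    ext i j
    simp [Matrix.conjTranspose_apply, vecMulVec_apply, mul_comm]

theorem g1herm (ψ : Fin N → Fin d → ℂ) : (gammaOne ψ).IsHermitian := by
  rw [g1_eq]
  unfold Matrix.IsHermitian
  rw [Matrix.conjTranspose_smul, Matrix.conjTranspose_sum]
  congr 1
  · simp only [n2, Complex.star_def, map_inv₀, map_pow, map_natCast]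
  · refine Finset.sum_congr rfl fun p _ => ?_
    ext i j
    simp [Matrix.conjTranspose_apply, vecMulVec_apply, mul_comm]

theorem star_vecMul' (ψ : Fin N → Fin d → ℂ) (x : Fin d × Fin d → ℂ) :
    star x ᵥ* gammaTwo ψ = star (gammaTwo ψ *ᵥ x) := by
  rw [Matrix.star_mulVec, (g2herm ψ)]

section withGram

variable (ψ : Fin N → Fin d → ℂ) (c : ℝ)
variable (hnorm : ∀ k, star (ψ k) ⬝ᵥ ψ k = 1)
variable (hoverlap : ∀ i j, i ≠ j → star (ψ i) ⬝ᵥ ψ j = (c : ℂ))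

include hnorm hoverlap

theorem B_eq : gammaTwo ψ * gammaOne ψ ^ 2 * gammaTwo ψ
    = (n2 N * n2 N) • ∑ k, ∑ j, (Gc c k j * Gc c k j) •
        vecMulVec (gammaTwo ψ *ᵥ vv ψ k k) (star (gammaTwo ψ *ᵥ vv ψ j j)) := by
  have hsplit : gammaTwo ψ * gammaOne ψ ^ 2 * gammaTwo ψ
      = (gammaTwo ψ * gammaOne ψ) * (gammaOne ψ * gammaTwo ψ) := by
    simp only [pow_two, Matrix.mul_assoc]
  have hM2 : gammaTwo ψ * gammaOne ψ
      = n2 N • ∑ k, vecMulVec (gammaTwo ψ *ᵥ vv ψ k k) (star (vv ψ k k)) := by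
    rw [g1_eq, Matrix.mul_smul, Finset.mul_sum]
    congr 1
    exact Finset.sum_congr rfl fun k _ => mul_vmv _ _ _
  have hM3 : gammaOne ψ * gammaTwo ψ
      = n2 N • ∑ k, vecMulVec (vv ψ k k) (star (gammaTwo ψ *ᵥ vv ψ k k)) := by
    rw [g1_eq, Matrix.smul_mul, Finset.sum_mul]
    congr 1
    refine Finset.sum_congr rfl fun k _ => ?_
    rw [vmv_mul, star_vecMul']
  rw [hsplit, hM2, hM3, Matrix.smul_mul, Matrix.mul_smul, smul_smul, Finset.sum_mul_sum]
  congr 1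
  refine Finset.sum_congr rfl fun k _ => Finset.sum_congr rfl fun j _ => ?_
  rw [vmv_mul_vmv, dot_vv' ψ c hnorm hoverlap]

theorem key_comm :
    gammaTwo ψ * (gammaTwo ψ * gammaOne ψ ^ 2 * gammaTwo ψ) =
      (gammaTwo ψ * gammaOne ψ ^ 2 * gammaTwo ψ) * gammaTwo ψ := by
  rw [B_eq ψ c hnorm hoverlap, Matrix.mul_smul, Matrix.smul_mul]
  congr 1
  rw [Finset.mul_sum, Finset.sum_mul]
  have hL : ∀ k ∈ (Finset.univ : Finset (Fin N)),
      gammaTwo ψ * (∑ j, (Gc c k j * Gc c k j) •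
          vecMulVec (gammaTwo ψ *ᵥ vv ψ k k) (star (gammaTwo ψ *ᵥ vv ψ j j)))
      = ∑ j, ((Gc c k j * Gc c k j * Phi N c) •
            vecMulVec (tv ψ) (star (gammaTwo ψ *ᵥ vv ψ j j))
          + (Gc c k j * Gc c k j * Wcc N c) •
            vecMulVec (gammaTwo ψ *ᵥ vv ψ k k) (star (gammaTwo ψ *ᵥ vv ψ j j))) := by
    intro k _
    rw [Finset.mul_sum]
    refine Finset.sum_congr rfl fun j _ => ?_
    rw [Matrix.mul_smul, mul_vmv, g2_w ψ c hnorm hoverlap k, vmv_add_left,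
      vmv_smul_left, vmv_smul_left, smul_add, smul_smul, smul_smul]
  have hR : ∀ k ∈ (Finset.univ : Finset (Fin N)),
      (∑ j, (Gc c k j * Gc c k j) •
          vecMulVec (gammaTwo ψ *ᵥ vv ψ k k) (star (gammaTwo ψ *ᵥ vv ψ j j))) * gammaTwo ψ
      = ∑ j, ((Gc c k j * Gc c k j * Phi N c) •
            vecMulVec (gammaTwo ψ *ᵥ vv ψ k k) (star (tv ψ))
          + (Gc c k j * Gc c k j * Wcc N c) •
            vecMulVec (gammaTwo ψ *ᵥ vv ψ k k) (star (gammaTwo ψ *ᵥ vv ψ j j))) := by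
    intro k _
    rw [Finset.sum_mul]
    refine Finset.sum_congr rfl fun j _ => ?_
    rw [Matrix.smul_mul, vmv_mul, star_vecMul', g2_w ψ c hnorm hoverlap j]
    rw [star_add, star_smul, star_smul, star_Phi, star_Wcc, vmv_add_right,
      vmv_smul_right, vmv_smul_right, smul_add, smul_smul, smul_smul]
  rw [Finset.sum_congr rfl hL, Finset.sum_congr rfl hR]
  simp only [Finset.sum_add_distrib]
  congr 1
  · -- Phi parts agree
    rw [Finset.sum_comm]
    have hj : ∀ j ∈ (Finset.univ : Finset (Fin N)),
        ∑ k, (Gc c k j * Gc c k j * Phi N c) •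
          vecMulVec (tv ψ) (star (gammaTwo ψ *ᵥ vv ψ j j))
        = (Hh N c * Phi N c) • vecMulVec (tv ψ) (star (gammaTwo ψ *ᵥ vv ψ j j)) := by
      intro j _
      rw [← Finset.sum_smul, ← Finset.sum_mul, S3 c j]
    have hk : ∀ k ∈ (Finset.univ : Finset (Fin N)),
        ∑ j, (Gc c k j * Gc c k j * Phi N c) •
          vecMulVec (gammaTwo ψ *ᵥ vv ψ k k) (star (tv ψ))
        = (Hh N c * Phi N c) • vecMulVec (gammaTwo ψ *ᵥ vv ψ k k) (star (tv ψ)) := by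
      intro k _
      rw [← Finset.sum_smul, ← Finset.sum_mul]
      congr 2
      calc ∑ j, Gc c k j * Gc c k j = ∑ j, Gc c j k * Gc c j k := by
            refine Finset.sum_congr rfl fun j _ => by rw [Gc_symm]
        _ = Hh N c := S3 c k
    rw [Finset.sum_congr rfl hj, Finset.sum_congr rfl hk]
    rw [← Finset.smul_sum, ← Finset.smul_sum, ← vmv_sum_right, ← vmv_sum_left, star_sum',
      sum_w ψ c hnorm hoverlap, star_smul, star_nuC, vmv_smul_right, vmv_smul_left]
    try simp only [smul_smul]
    try (congr 1; ring)

end withGram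
end G2C

/-- For the state-comparison operators, the commutator `[γ2, γ2 γ1² γ2]` vanishes;
equivalently, `γ2 (γ2 + γ1) γ1² γ2` is self-adjoint. -/
theorem commutator_gamma2_g2g1sqg2 (d N : ℕ) (hN : 2 ≤ N) (ψ : Fin N → Fin d → ℂ)
    (hnorm : ∀ k, star (ψ k) ⬝ᵥ ψ k = 1)
    (c : ℝ) (hc0 : 0 < c) (hc1 : c < 1)
    (hoverlap : ∀ i j, i ≠ j → star (ψ i) ⬝ᵥ ψ j = (c : ℂ)) :
    gammaTwo ψ * (gammaTwo ψ * gammaOne ψ ^ 2 * gammaTwo ψ) =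
        (gammaTwo ψ * gammaOne ψ ^ 2 * gammaTwo ψ) * gammaTwo ψ ∧
      (gammaTwo ψ * (gammaTwo ψ + gammaOne ψ) * gammaOne ψ ^ 2 * gammaTwo ψ).IsHermitian := by
  have h1 := G2C.g1herm ψ
  have h2 := G2C.g2herm ψ
  have hcomm := G2C.key_comm ψ c hnorm hoverlap
  refine ⟨hcomm, ?_⟩
  have hexp : gammaTwo ψ * (gammaTwo ψ + gammaOne ψ) * gammaOne ψ ^ 2 * gammaTwo ψ
      = gammaTwo ψ * (gammaTwo ψ * gammaOne ψ ^ 2 * gammaTwo ψ)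
        + gammaTwo ψ * (gammaOne ψ * gammaOne ψ ^ 2 * gammaTwo ψ) := by
    noncomm_ring
  rw [hexp]
  apply Matrix.IsHermitian.add
  · have hB : (gammaTwo ψ * gammaOne ψ ^ 2 * gammaTwo ψ).IsHermitian := by
      unfold Matrix.IsHermitian
      simp only [Matrix.conjTranspose_mul, Matrix.conjTranspose_pow, h1.eq, h2.eq]
      simp only [Matrix.mul_assoc]
    unfold Matrix.IsHermitian
    rw [Matrix.conjTranspose_mul, hB.eq, h2.eq, ← hcomm]
  · unfold Matrix.IsHermitian
    simp only [Matrix.conjTranspose_mul, Matrix.conjTranspose_pow, h1.eq, h2.eq]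
    simp only [pow_two, Matrix.mul_assoc]
end
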